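/- Fix 0 < r ≤ 1 and let k = ⌊1/r⌋. There exists a constant 0 < d_r ≤ 1 such that for all sufficiently large n, d_r·ω(n,k) ≤ Q(n,⌈rn⌉) ≤ ω(n,k). In particular Q(n,⌈rn⌉) = Θ(ω(n,k)). -/

import Mathlib

open SimpleGraph

/-- The independence number of a graph: clique number of the complement. -/
noncomputable def _root_.indepNum {V : Type*} (G : SimpleGraph V) : ℕ := Gᶜ.cliqueNum

/-- The chromatic number of a graph, as a natural number. -/
noncomputable def chi {V : Type*} (G : SimpleGraph V) : ℕ := G.chromaticNumber.toNat

/-- The inverse Ramsey number ω(n,k): minimum clique number over graphs on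
`n` vertices with independence number at most `k`. -/
noncomputable def invRamsey (n k : ℕ) : ℕ :=
  sInf {w | ∃ G : SimpleGraph (Fin n), _root_.indepNum G ≤ k ∧ G.cliqueNum = w}

/-- Q(n,c): minimum clique number over graphs on `n` vertices with chromatic number `c`. -/
noncomputable def Q (n c : ℕ) : ℕ :=
  sInf {w | ∃ G : SimpleGraph (Fin n), chi G = c ∧ G.cliqueNum = w}

section helpers

variable {V : Type*} [Fintype V] {G H : SimpleGraph V}

lemma colorable_chi (G : SimpleGraph V) : G.Colorable (chi G) :=
  G.colorable_chromaticNumber_of_fintype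

lemma chi_le_iff {t : ℕ} : chi G ≤ t ↔ G.Colorable t := by
  constructor
  · intro h
    exact (colorable_chi G).mono h
  · intro h
    have h2 := h.chromaticNumber_le
    have : G.chromaticNumber ≠ ⊤ := by
      exact (lt_of_le_of_lt h2 (WithTop.coe_lt_top t)).ne
    exact ENat.toNat_le_of_le_coe h2

lemma le_chi_of_not_colorable {t : ℕ} (h : ¬ G.Colorable t) : t + 1 ≤ chi G := by
  by_contra hc
  push_neg at hc
  exact h ((chi_le_iff).mp (by omega))

lemma cliqueNum_mono (h : H ≤ G) : H.cliqueNum ≤ G.cliqueNum := by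
  obtain ⟨s, hs⟩ := H.exists_isNClique_cliqueNum
  have : G.IsNClique H.cliqueNum s := hs.mono h
  simpa [this.card_eq] using this.isClique.card_le_cliqueNum

lemma cliqueNum_le_of_embedding {W : Type*} [Fintype W] {H : SimpleGraph W}
    (f : H ↪g G) : H.cliqueNum ≤ G.cliqueNum := by
  obtain ⟨s, hs⟩ := H.exists_isNClique_cliqueNum
  have hc : G.IsClique (s.map f.toEmbedding) := by
    intro u hu v hv huv
    simp only [Finset.coe_map, Set.mem_image, Finset.mem_coe] at hu hv
    obtain ⟨a, ha, rfl⟩ := hu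
    obtain ⟨b, hb, rfl⟩ := hv
    have hab : a ≠ b := fun h => huv (by rw [h])
    exact f.map_adj_iff.mpr (hs.isClique ha hb hab)
  have := hc.card_le_cliqueNum
  rwa [Finset.card_map, hs.card_eq] at this

lemma card_le_chi_mul_indepNum (G : SimpleGraph V) [Nonempty V] :
    Fintype.card V ≤ chi G * _root_.indepNum G := by
  obtain ⟨C⟩ := colorable_chi G
  classical
  have hcard : (Finset.univ : Finset V).card =
      ∑ i : Fin (chi G), (Finset.univ.filter (fun v => C v = i)).card :=
    Finset.card_eq_sum_card_fiberwise (fun v _ => Finset.mem_univ (C v))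
  have hfiber : ∀ i : Fin (chi G),
      (Finset.univ.filter (fun v => C v = i)).card ≤ _root_.indepNum G := by
    intro i
    have hind : Gᶜ.IsClique (Finset.univ.filter (fun v => C v = i)) := by
      intro u hu v hv huv
      simp only [Finset.coe_filter, Set.mem_setOf_eq] at hu hv
      refine ⟨huv, fun hadj => ?_⟩
      exact C.valid hadj (hu.2.trans hv.2.symm)
    exact hind.card_le_cliqueNum
  calc Fintype.card V = _ := hcard
    _ ≤ ∑ _i : Fin (chi G), _root_.indepNum G := Finset.sum_le_sum (fun i _ => hfiber i)
    _ = chi G * _root_.indepNum G := by simp [Finset.sum_const, mul_comm]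

end helpers

section del
variable {V : Type*} [Fintype V] {G : SimpleGraph V}

lemma colorable_of_deleteEdge {a b : V} {t : ℕ}
    (h : (G.deleteEdges {s(a,b)}).Colorable t) : G.Colorable (t+1) := by
  classical
  obtain ⟨C⟩ := h
  refine ⟨Coloring.mk (fun v => if v = a then Fin.last t else (C v).castSucc) ?_⟩
  intro u v huv heq
  by_cases hu : u = a <;> by_cases hv : v = a
  · rw [hu, hv] at huv; exact G.loopless.irrefl a huv
  · rw [if_pos hu, if_neg hv] at heq
    exact absurd heq.symm (Fin.castSucc_lt_last (C v)).ne
  · rw [if_neg hu, if_pos hv] at heq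
    exact absurd heq (Fin.castSucc_lt_last (C u)).ne
  · rw [if_neg hu, if_neg hv] at heq
    have hadj : (G.deleteEdges {s(a,b)}).Adj u v := by
      rw [deleteEdges_adj]
      refine ⟨huv, ?_⟩
      simp only [Set.mem_singleton_iff, Sym2.eq_iff]
      push_neg
      constructor
      · intro h1; exact absurd h1 hu
      · intro h1 h2; exact absurd h2 hv
    exact C.valid hadj (Fin.castSucc_injective t heq)

lemma exists_le_chi_eq : ∀ (m : ℕ) (G : SimpleGraph V), G.edgeSet.ncard ≤ m →
    ∀ c : ℕ, 1 ≤ c → c ≤ chi G → ∃ H, H ≤ G ∧ chi H = c := by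
  intro m
  induction m with
  | zero =>
    intro G hG c hc1 hc2
    have hemp : G.edgeSet = ∅ := by
      have := G.edgeSet.toFinite
      rw [Nat.le_zero] at hG
      exact (Set.ncard_eq_zero this).mp hG
    have : G.Colorable 1 := by
      refine ⟨Coloring.mk (fun _ => 0) ?_⟩
      intro u v huv
      exact absurd ((G.mem_edgeSet).mpr huv) (by simp [hemp])
    have := chi_le_iff.mpr this
    exact ⟨G, le_refl _, by omega⟩
  | succ m ih =>
    intro G hG c hc1 hc2
    by_cases hceq : chi G = c
    · exact ⟨G, le_refl _, hceq⟩
    have hlt : c < chi G := lt_of_le_of_ne hc2 (fun h => hceq h.symm)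
    -- G has an edge since chi G ≥ 2
    have hne : G.edgeSet.Nonempty := by
      by_contra hemp
      rw [Set.not_nonempty_iff_eq_empty] at hemp
      have : G.Colorable 1 := by
        refine ⟨Coloring.mk (fun _ => 0) ?_⟩
        intro u v huv
        exact absurd ((G.mem_edgeSet).mpr huv) (by simp [hemp])
      have := chi_le_iff.mpr this
      omega
    obtain ⟨e, he⟩ := hne
    induction e with
    | h a b =>
      set G' := G.deleteEdges {s(a,b)} with hG'
      have hle : G' ≤ G := deleteEdges_le _
      have hchain : chi G ≤ chi G' + 1 :=
        chi_le_iff.mpr (colorable_of_deleteEdge (colorable_chi G'))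
      have hcard : G'.edgeSet.ncard ≤ m := by
        have hsub : G'.edgeSet = G.edgeSet \ {s(a,b)} := by
          rw [hG', edgeSet_deleteEdges]
        rw [hsub]
        have := Set.ncard_diff_singleton_lt_of_mem he G.edgeSet.toFinite
        omega
      obtain ⟨H, hH1, hH2⟩ := ih G' hcard c hc1 (by omega)
      exact ⟨H, le_trans hH1 hle, hH2⟩

end del

section iso
variable {V W : Type*} [Fintype V] [Fintype W] {G : SimpleGraph V} {H : SimpleGraph W}

lemma chi_le_of_embedding (f : G ↪g H) : chi G ≤ chi H :=
  chi_le_iff.mpr (SimpleGraph.Colorable.of_hom f.toHom (colorable_chi H))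

lemma chi_eq_of_iso (f : G ≃g H) : chi G = chi H :=
  le_antisymm (chi_le_of_embedding f.toEmbedding) (chi_le_of_embedding f.symm.toEmbedding)

lemma cliqueNum_eq_of_iso (f : G ≃g H) : G.cliqueNum = H.cliqueNum :=
  le_antisymm (cliqueNum_le_of_embedding f.toEmbedding)
    (cliqueNum_le_of_embedding f.symm.toEmbedding)

def isoCompl (f : G ≃g H) : Gᶜ ≃g Hᶜ where
  toEquiv := f.toEquiv
  map_rel_iff' := by
    intro a b
    simp only [compl_adj]
    rw [(EmbeddingLike.injective f.toEquiv).ne_iff]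
    exact and_congr_right fun _ => not_congr f.map_adj_iff

lemma indepNum_eq_of_iso (f : G ≃g H) : _root_.indepNum G = _root_.indepNum H :=
  cliqueNum_eq_of_iso (isoCompl f)

lemma cliqueNum_le_card (G : SimpleGraph V) : G.cliqueNum ≤ Fintype.card V := by
  obtain ⟨s, hs⟩ := G.exists_isNClique_cliqueNum
  rw [← hs.card_eq]
  exact Finset.card_le_card (Finset.subset_univ s) |>.trans (by simp)

lemma indepNum_le_card (G : SimpleGraph V) : _root_.indepNum G ≤ Fintype.card V :=
  cliqueNum_le_card Gᶜ

end iso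

section removal
variable {V : Type*} [Fintype V] [DecidableEq V] {G : SimpleGraph V}

lemma colorable_induce_of_indep (S I : Finset V) (hIS : I ⊆ S)
    (hind : ∀ u ∈ I, ∀ v ∈ I, u ≠ v → ¬ G.Adj u v) {t : ℕ}
    (h : (G.induce ((S \ I : Finset V) : Set V)).Colorable t) :
    (G.induce (S : Set V)).Colorable (t+1) := by
  obtain ⟨C⟩ := h
  refine ⟨Coloring.mk (fun v => if hv : v.val ∈ I then Fin.last t
      else (C ⟨v.val, by
        simp only [Finset.coe_sdiff, Set.mem_diff, Finset.mem_coe]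
        exact ⟨v.property, hv⟩⟩).castSucc) ?_⟩
  rintro ⟨u, hu⟩ ⟨v, hv⟩ huv heq
  have hadj : G.Adj u v := huv
  have hne : u ≠ v := hadj.ne
  dsimp only at heq
  by_cases h1 : u ∈ I <;> by_cases h2 : v ∈ I
  · exact hind u h1 v h2 hne hadj
  · rw [dif_pos h1, dif_neg h2] at heq
    exact absurd heq.symm (Fin.castSucc_lt_last _).ne
  · rw [dif_neg h1, dif_pos h2] at heq
    exact absurd heq (Fin.castSucc_lt_last _).ne
  · rw [dif_neg h1, dif_neg h2] at heq
    have : (G.induce ((S \ I : Finset V) : Set V)).Adj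
        ⟨u, by simp only [Finset.coe_sdiff, Set.mem_diff, Finset.mem_coe]; exact ⟨hu, h1⟩⟩
        ⟨v, by simp only [Finset.coe_sdiff, Set.mem_diff, Finset.mem_coe]; exact ⟨hv, h2⟩⟩ :=
      hadj
    exact C.valid this (Fin.castSucc_injective t heq)

lemma removal_rec (G : SimpleGraph V) (k : ℕ) : ∀ (m : ℕ) (S : Finset V), S.card ≤ m →
    ∃ (T : Finset V) (t : ℕ), T ⊆ S ∧
      _root_.indepNum (G.induce (T : Set V)) ≤ k ∧
      chi (G.induce (S : Set V)) ≤ chi (G.induce (T : Set V)) + t ∧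
      T.card + t * (k + 1) = S.card := by
  intro m
  induction m with
  | zero =>
    intro S hS
    refine ⟨S, 0, Finset.Subset.refl S, ?_, by omega, by omega⟩
    have := indepNum_le_card (G.induce (S : Set V))
    have hc : Fintype.card (S : Set V) = S.card := by simp
    omega
  | succ m ih =>
    intro S hS
    by_cases hk : _root_.indepNum (G.induce (S : Set V)) ≤ k
    · exact ⟨S, 0, Finset.Subset.refl S, hk, by omega, by omega⟩
    · push_neg at hk
      obtain ⟨s, hs⟩ := (G.induce (S : Set V))ᶜ.exists_isNClique_cliqueNum
      have hcard : k + 1 ≤ s.card := by rw [hs.card_eq]; exact hk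
      obtain ⟨s', hs'sub, hs'card⟩ := Finset.exists_subset_card_eq hcard
      set I : Finset V := s'.image (fun x => x.val) with hI
      have hIcard : I.card = k + 1 := by
        rw [hI, Finset.card_image_of_injective _ Subtype.val_injective, hs'card]
      have hIS : I ⊆ S := by
        intro x hx
        rw [hI] at hx
        obtain ⟨a, _, rfl⟩ := Finset.mem_image.mp hx
        exact a.property
      have hind : ∀ u ∈ I, ∀ v ∈ I, u ≠ v → ¬ G.Adj u v := by
        intro u hu v hv huv hadj
        obtain ⟨a, ha, rfl⟩ := Finset.mem_image.mp hu
        obtain ⟨b, hb, rfl⟩ := Finset.mem_image.mp hv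
        have hab : a ≠ b := fun h => huv (by rw [h])
        have := hs.isClique (hs'sub ha) (hs'sub hb) hab
        rw [compl_adj] at this
        exact this.2 hadj
      set S' := S \ I with hS'
      have hS'card : S'.card = S.card - (k+1) := by
        rw [hS', Finset.card_sdiff_of_subset hIS, hIcard]
      have hSI : k + 1 ≤ S.card := hIcard ▸ Finset.card_le_card hIS
      obtain ⟨T, t, hTsub, hTk, hTchi, hTcard⟩ := ih S' (by omega)
      refine ⟨T, t + 1, hTsub.trans Finset.sdiff_subset, hTk, ?_, by rw [add_mul, one_mul]; omega⟩
      have hstep : chi (G.induce (S : Set V)) ≤ chi (G.induce (S' : Set V)) + 1 :=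
        chi_le_iff.mpr (colorable_induce_of_indep S I hIS hind (colorable_chi _))
      omega

end removal

section blocks

lemma cliqueNum_bot_le_one {V : Type*} [Fintype V] : (⊥ : SimpleGraph V).cliqueNum ≤ 1 := by
  obtain ⟨s, hs⟩ := (⊥ : SimpleGraph V).exists_isNClique_cliqueNum
  rw [← hs.card_eq]
  refine Finset.card_le_one.mpr (fun a ha b hb => ?_)
  by_contra hne
  exact hs.isClique ha hb hne

lemma invRamsey_set_nonempty (n k : ℕ) (hk : 1 ≤ k) :
    {w | ∃ G : SimpleGraph (Fin n), _root_.indepNum G ≤ k ∧ G.cliqueNum = w}.Nonempty := by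
  refine ⟨(⊤ : SimpleGraph (Fin n)).cliqueNum, ⊤, ?_, rfl⟩
  unfold _root_.indepNum
  rw [compl_top]
  exact le_trans cliqueNum_bot_le_one hk

lemma invRamsey_le {W : Type*} [Fintype W] (G : SimpleGraph W) (k : ℕ) (h : _root_.indepNum G ≤ k) :
    invRamsey (Fintype.card W) k ≤ G.cliqueNum := by
  classical
  have iso : (G.comap ⇑(Fintype.equivFin W).symm) ≃g G := ⟨(Fintype.equivFin W).symm, Iff.rfl⟩
  apply Nat.sInf_le
  exact ⟨G.comap ⇑(Fintype.equivFin W).symm,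
    by rw [indepNum_eq_of_iso iso]; exact h, cliqueNum_eq_of_iso iso⟩

lemma invRamsey_le_mul (n m k : ℕ) (hm : 1 ≤ m) (hk : 1 ≤ k) :
    invRamsey n k ≤ ((n-1)/m + 1) * invRamsey m k := by
  classical
  obtain ⟨G₀, hG₀k, hG₀w⟩ : ∃ G₀ : SimpleGraph (Fin m), _root_.indepNum G₀ ≤ k ∧
      G₀.cliqueNum = invRamsey m k := Nat.sInf_mem (invRamsey_set_nonempty m k hk)
  set B := (n-1)/m + 1 with hB
  set w₀ := invRamsey m k with hw₀
  set rep : Fin n → Fin m := fun u => ⟨u.val % m, Nat.mod_lt _ hm⟩ with hrep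
  set blk : Fin n → ℕ := fun u => u.val / m with hblk
  have key : ∀ u v : Fin n, blk u = blk v → rep u = rep v → u = v := by
    intro u v h1 h2
    have h2' := congrArg Fin.val h2
    simp only [hrep] at h2'
    simp only [hblk] at h1
    have : u.val = v.val := by
      have hu := Nat.div_add_mod u.val m
      have hv := Nat.div_add_mod v.val m
      rw [h1, h2'] at hu
      omega
    exact Fin.ext this
  set G' : SimpleGraph (Fin n) :=
    { Adj := fun u v => u ≠ v ∧ (blk u ≠ blk v ∨ G₀.Adj (rep u) (rep v)),
      symm := Std.Symm.mk <| by
        rintro u v ⟨h1, h2⟩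
        refine ⟨h1.symm, ?_⟩
        rcases h2 with h2 | h2
        · exact Or.inl h2.symm
        · exact Or.inr h2.symm
      loopless := ⟨fun u h => h.1 rfl⟩ } with hG'
  have hadj : ∀ u v : Fin n, G'.Adj u v ↔ u ≠ v ∧ (blk u ≠ blk v ∨ G₀.Adj (rep u) (rep v)) :=
    fun u v => Iff.rfl
  -- independence number of G' is at most k
  have hindep : _root_.indepNum G' ≤ k := by
    obtain ⟨s, hs⟩ := (G'ᶜ).exists_isNClique_cliqueNum
    unfold _root_.indepNum
    rw [← hs.card_eq]
    have hinj : Set.InjOn rep s := by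
      intro a ha b hb hab
      by_contra hne
      have := hs.isClique ha hb hne
      rw [compl_adj, hadj] at this
      push_neg at this
      obtain ⟨hne', h'⟩ := this
      exact hne (key a b (h' hne').1 hab)
    rw [← Finset.card_image_of_injOn hinj]
    have hcl : G₀ᶜ.IsClique (s.image rep) := by
      intro x hx y hy hxy
      simp only [Finset.coe_image, Set.mem_image, Finset.mem_coe] at hx hy
      obtain ⟨a, ha, rfl⟩ := hx
      obtain ⟨b, hb, rfl⟩ := hy
      have hab : a ≠ b := fun h => hxy (by rw [h])
      have := hs.isClique ha hb hab
      rw [compl_adj, hadj] at this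
      push_neg at this
      exact ⟨hxy, (this.2 this.1).2⟩
    exact le_trans hcl.card_le_cliqueNum hG₀k
  -- clique number of G' is at most B * w₀
  have hclq : G'.cliqueNum ≤ B * w₀ := by
    obtain ⟨s, hs⟩ := G'.exists_isNClique_cliqueNum
    rw [← hs.card_eq]
    have hfib : ∀ x ∈ s, blk x ∈ Finset.range B := by
      intro x _
      rw [Finset.mem_range, hB]
      simp only [hblk]
      have hxn : x.val < n := x.isLt
      have h1 : x.val ≤ n - 1 := by omega
      have h2 := Nat.div_le_div_right (c := m) h1
      omega
    rw [Finset.card_eq_sum_card_fiberwise hfib]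
    have hbound : ∀ b ∈ Finset.range B, (s.filter (fun x => blk x = b)).card ≤ w₀ := by
      intro b _
      set f := s.filter (fun x => blk x = b) with hf
      have hinj : Set.InjOn rep f := by
        intro x hx y hy hxy
        simp only [hf, Finset.coe_filter, Set.mem_setOf_eq] at hx hy
        exact key x y (hx.2.trans hy.2.symm) hxy
      rw [← Finset.card_image_of_injOn hinj]
      have hcl : G₀.IsClique (f.image rep) := by
        intro x hx y hy hxy
        simp only [Finset.coe_image, Set.mem_image, Finset.mem_coe] at hx hy
        obtain ⟨a, ha, rfl⟩ := hx
        obtain ⟨c, hc, rfl⟩ := hy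
        have hac : a ≠ c := fun h => hxy (by rw [h])
        simp only [hf, Finset.mem_filter] at ha hc
        have := hs.isClique ha.1 hc.1 hac
        rw [hadj] at this
        rcases this.2 with h | h
        · exact absurd (ha.2.trans hc.2.symm) h
        · exact h
      rw [← hG₀w]
      exact hcl.card_le_cliqueNum
    calc ∑ b ∈ Finset.range B, (s.filter (fun x => blk x = b)).card
        ≤ ∑ _b ∈ Finset.range B, w₀ := Finset.sum_le_sum hbound
      _ = B * w₀ := by simp [mul_comm]
  exact le_trans (Nat.sInf_le ⟨G', hindep, rfl⟩) hclq

end blocks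

lemma cliqueNum_induce_le {V : Type*} [Fintype V] (G : SimpleGraph V) (s : Set V) :
    (G.induce s).cliqueNum ≤ G.cliqueNum := by
  classical
  exact cliqueNum_le_of_embedding
    ((induceHomOfLE G (le_top : s ≤ Set.univ)).trans (induceUnivIso G).toEmbedding)

theorem stmt_13 (r : ℝ) (hr0 : 0 < r) (hr1 : r ≤ 1) (k : ℕ) (hk : k = ⌊1 / r⌋₊) :
    ∃ d : ℝ, 0 < d ∧ d ≤ 1 ∧ ∃ N : ℕ, ∀ n ≥ N,
      d * (invRamsey n k : ℝ) ≤ (Q n ⌈r * n⌉₊ : ℝ) ∧ Q n ⌈r * n⌉₊ ≤ invRamsey n k := by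
  classical
  have hr0' : (0:ℝ) < 1/r := by positivity
  have hk1 : 1 ≤ k := by
    rw [hk]
    exact Nat.le_floor (by rw [Nat.cast_one]; exact one_le_one_div hr0 hr1)
  have hkr : (k:ℝ) ≤ 1/r := hk ▸ Nat.floor_le hr0'.le
  have hk0' : (0:ℝ) < k := by exact_mod_cast hk1
  have hrk1 : 1 < r * ((k:ℝ)+1) := by
    have h1 : (1:ℝ)/r < k + 1 := by
      rw [hk]; exact_mod_cast Nat.lt_floor_add_one (1/r)
    calc (1:ℝ) = r * (1/r) := by field_simp
      _ < r * (k+1) := by exact mul_lt_mul_of_pos_left h1 hr0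
  set ε : ℝ := (r * ((k:ℝ)+1) - 1) / k with hε_def
  have hε0 : 0 < ε := by
    apply div_pos (by linarith) hk0'
  have hrk_le : r * (k:ℝ) ≤ 1 := by
    calc r * (k:ℝ) ≤ r * (1/r) := mul_le_mul_of_nonneg_left hkr hr0.le
      _ = 1 := by field_simp
  set M := ⌈1/ε⌉₊ with hM_def
  have hMε : 1/ε ≤ (M:ℝ) := Nat.le_ceil _
  have hM1 : 1 ≤ M := by
    rw [hM_def]
    exact Nat.one_le_ceil_iff.mpr (by positivity)
  have hM0' : (0:ℝ) < M := by exact_mod_cast hM1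
  refine ⟨1/(M:ℝ), by positivity, by
    rw [div_le_one hM0']; exact_mod_cast hM1, M, ?_⟩
  intro n hn
  have hn1 : 1 ≤ n := le_trans hM1 hn
  have hn0' : (0:ℝ) < n := by exact_mod_cast hn1
  set c := ⌈r * n⌉₊ with hc_def
  have hc1 : 1 ≤ c := Nat.one_le_ceil_iff.mpr (by positivity)
  have hrnc : r * n ≤ (c:ℝ) := Nat.le_ceil _
  have hεn : 1 ≤ ε * n := by
    have hnM : (M:ℝ) ≤ n := by exact_mod_cast hn
    calc (1:ℝ) = ε * (1/ε) := by field_simp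
      _ ≤ ε * n := mul_le_mul_of_nonneg_left (le_trans hMε hnM) hε0.le
  -- Part 1 : upper bound
  obtain ⟨G₀, hG₀k, hG₀w⟩ : ∃ G₀ : SimpleGraph (Fin n), _root_.indepNum G₀ ≤ k ∧
      G₀.cliqueNum = invRamsey n k := Nat.sInf_mem (invRamsey_set_nonempty n k hk1)
  have hupper : Q n c ≤ invRamsey n k := by
    have : Nonempty (Fin n) := Fin.pos_iff_nonempty.mp (by omega)
    have hcard : n ≤ chi G₀ * _root_.indepNum G₀ := by
      simpa using card_le_chi_mul_indepNum G₀
    have hchik : n ≤ chi G₀ * k :=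
      le_trans hcard (Nat.mul_le_mul_left _ hG₀k)
    have hchiR : r * n ≤ (chi G₀ : ℝ) := by
      have h1 : (n:ℝ) ≤ (chi G₀ : ℝ) * k := by exact_mod_cast hchik
      calc r * n ≤ r * ((chi G₀ : ℝ) * k) := mul_le_mul_of_nonneg_left h1 hr0.le
        _ = (chi G₀ : ℝ) * (r * k) := by ring
        _ ≤ (chi G₀ : ℝ) * 1 := mul_le_mul_of_nonneg_left hrk_le (by positivity)
        _ = chi G₀ := by ring
    have hcchi : c ≤ chi G₀ := Nat.ceil_le.mpr hchiR
    obtain ⟨H, hHle, hHchi⟩ := exists_le_chi_eq G₀.edgeSet.ncard G₀ le_rfl c hc1 hcchi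
    calc Q n c ≤ H.cliqueNum := Nat.sInf_le ⟨H, hHchi, rfl⟩
      _ ≤ G₀.cliqueNum := cliqueNum_mono hHle
      _ = invRamsey n k := hG₀w
  refine ⟨?_, hupper⟩
  -- Part 2 : lower bound
  have hQne : {w | ∃ G : SimpleGraph (Fin n), chi G = c ∧ G.cliqueNum = w}.Nonempty := by
    have hchiT : chi (⊤ : SimpleGraph (Fin n)) = n := by
      unfold chi
      rw [chromaticNumber_top]
      simp
    have hcn : c ≤ n := Nat.ceil_le.mpr (by
      calc r * n ≤ 1 * n := mul_le_mul_of_nonneg_right hr1 hn0'.le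
        _ = n := by ring)
    obtain ⟨H, _, hHchi⟩ := exists_le_chi_eq (⊤ : SimpleGraph (Fin n)).edgeSet.ncard
      (⊤ : SimpleGraph (Fin n)) le_rfl c hc1 (by rw [hchiT]; exact hcn)
    exact ⟨H.cliqueNum, H, hHchi, rfl⟩
  obtain ⟨Gs, hGs_chi, hGs_w⟩ : ∃ G : SimpleGraph (Fin n), chi G = c ∧
      G.cliqueNum = Q n c := Nat.sInf_mem hQne
  obtain ⟨T, t, _, hTk, hTchi, hTcard⟩ :=
    removal_rec Gs k n Finset.univ (by simp)
  rw [Finset.coe_univ] at hTchi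
  rw [chi_eq_of_iso (induceUnivIso Gs), hGs_chi] at hTchi
  simp only [Fintype.card_fin, Finset.card_univ] at hTcard
  set s := T.card with hs_def
  have hchiT_le : chi (Gs.induce (T : Set (Fin n))) ≤ s := by
    rw [chi_le_iff]
    have := colorable_of_fintype (Gs.induce (T : Set (Fin n)))
    have hcardT : Fintype.card (T : Set (Fin n)) = s := by simp [hs_def]
    rwa [hcardT] at this
  -- real arithmetic for s ≥ ε n
  have hcst : c ≤ s + t := le_trans hTchi (by omega)
  have hcstR : (c:ℝ) ≤ s + t := by exact_mod_cast hcst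
  have hcardR : (s:ℝ) + t * ((k:ℝ)+1) = n := by exact_mod_cast hTcard
  have hsεn : ε * n ≤ s := by
    rw [hε_def, div_mul_eq_mul_div, div_le_iff₀ hk0']
    nlinarith [mul_le_mul_of_nonneg_right (le_trans hrnc hcstR) (by positivity : (0:ℝ) ≤ (k:ℝ)+1)]
  have hs1 : 1 ≤ s := by
    have : (1:ℝ) ≤ s := le_trans hεn hsεn
    exact_mod_cast this
  -- invRamsey s k ≤ cliqueNum of induced graph
  have hinv_s : invRamsey s k ≤ (Gs.induce (T : Set (Fin n))).cliqueNum := by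
    have h1 := invRamsey_le (Gs.induce (T : Set (Fin n))) k hTk
    have hcardT : Fintype.card (T : Set (Fin n)) = s := by simp [hs_def]
    rwa [hcardT] at h1
  have hnsM : n ≤ s * M := by
    have h1 : (n:ℝ) ≤ (s:ℝ) * M := by
      calc (n:ℝ) = (ε * n) * (1/ε) := by field_simp
        _ ≤ (s:ℝ) * M := mul_le_mul hsεn hMε (by positivity) (by positivity)
    exact_mod_cast h1
  have hBM : (n-1)/s + 1 ≤ M := by
    have h1 : (n-1)/s < M := (Nat.div_lt_iff_lt_mul (by omega)).mpr (by
      calc n - 1 < n := by omega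
        _ ≤ M * s := by rw [mul_comm]; exact hnsM)
    omega
  have hchain : invRamsey n k ≤ M * Q n c := by
    calc invRamsey n k ≤ ((n-1)/s + 1) * invRamsey s k := invRamsey_le_mul n s k hs1 hk1
      _ ≤ M * invRamsey s k := Nat.mul_le_mul_right _ hBM
      _ ≤ M * (Gs.induce (T : Set (Fin n))).cliqueNum := Nat.mul_le_mul_left _ hinv_s
      _ ≤ M * Gs.cliqueNum := Nat.mul_le_mul_left _ (cliqueNum_induce_le Gs _)
      _ = M * Q n c := by rw [hGs_w]
  rw [one_div, inv_mul_le_iff₀ hM0']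
  exact_mod_cast hchain
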